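/- Minkowski space ℝⁿ₁ with its causal relation ≤, timelike relation ≪, and time separation τ forms a Lorentzian pre-length space: τ is lower semicontinuous, τ(x,z) ≥ τ(x,y) + τ(y,z) for x ≤ y ≤ z, τ(x,y) = 0 whenever x ≰ y, and τ(x,y) > 0 iff x ≪ y. -/
import Mathlib


open Finset in
/-- The Minkowski bilinear form on ℝⁿ⁺¹₁. -/
def eta (n : ℕ) (v w : Fin (n + 1) → ℝ) : ℝ :=
  -(v 0 * w 0) + ∑ i : Fin n, v i.succ * w i.succ

/-- A vector is future-directed timelike. -/
def FdTimelike (n : ℕ) (v : Fin (n + 1) → ℝ) : Prop := eta n v v < 0 ∧ 0 < v 0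

/-- A vector is future-directed causal. -/
def FdCausal (n : ℕ) (v : Fin (n + 1) → ℝ) : Prop := eta n v v ≤ 0 ∧ v ≠ 0 ∧ 0 < v 0

/-- The causal relation on Minkowski space. -/
def CausalLe (n : ℕ) (p q : Fin (n + 1) → ℝ) : Prop := p = q ∨ FdCausal n (q - p)

/-- The chronological (timelike) relation on Minkowski space. -/
def ChronLt (n : ℕ) (p q : Fin (n + 1) → ℝ) : Prop := FdTimelike n (q - p)

open Classical in
/-- The time separation function of Minkowski space. -/
noncomputable def tauMink (n : ℕ) (p q : Fin (n + 1) → ℝ) : ℝ :=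
  if FdCausal n (q - p) then Real.sqrt (-(eta n (q - p) (q - p))) else 0

/-! ### Auxiliary lemmas -/

lemma eta_add_add (n : ℕ) (u w : Fin (n+1) → ℝ) :
    eta n (u + w) (u + w) = eta n u u + 2 * eta n u w + eta n w w := by
  have h : (∑ i : Fin n, ((u+w) i.succ * (u+w) i.succ))
      = ∑ i : Fin n, (u i.succ * u i.succ + 2*(u i.succ * w i.succ) + w i.succ * w i.succ) :=
    Finset.sum_congr rfl (fun i _ => by simp only [Pi.add_apply]; ring)
  simp only [eta]
  rw [h, Finset.sum_add_distrib, Finset.sum_add_distrib, ← Finset.mul_sum]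
  simp only [Pi.add_apply]
  ring

lemma spatial_sq_nonneg (n : ℕ) (u : Fin (n+1) → ℝ) :
    0 ≤ ∑ i : Fin n, u i.succ * u i.succ :=
  Finset.sum_nonneg (fun i _ => mul_self_nonneg _)

lemma spatial_cs (n : ℕ) (u w : Fin (n+1) → ℝ) :
    (∑ i : Fin n, u i.succ * w i.succ)^2
      ≤ (∑ i : Fin n, u i.succ * u i.succ) * ∑ i : Fin n, w i.succ * w i.succ := by
  have := Finset.sum_mul_sq_le_sq_mul_sq Finset.univ
    (fun i : Fin n => u i.succ) (fun i => w i.succ)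
  simpa [sq] using this

/-- Core real-number inequality: cross term is nonpositive. -/
lemma key_cross (a b A B C : ℝ) (ha : 0 < a) (hb : 0 < b) (hA : 0 ≤ A) (hB : 0 ≤ B)
    (hAa : A ≤ a * a) (hBb : B ≤ b * b) (hC : C^2 ≤ A * B) : C ≤ a * b := by
  nlinarith [mul_pos ha hb, sq_nonneg (C - a*b), sq_nonneg (C + a*b),
    mul_nonneg (mul_nonneg ha.le hb.le) hB, mul_nonneg hA hB]

lemma key_cross_strict (a b A B C : ℝ) (ha : 0 < a) (hb : 0 < b) (hA : 0 ≤ A) (hB : 0 ≤ B)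
    (hAa : A < a * a) (hBb : B < b * b) (hC : C^2 ≤ A * B) : C < a * b := by
  nlinarith [mul_pos ha hb, sq_nonneg (C - a*b), sq_nonneg (C + a*b),
    mul_nonneg (mul_nonneg ha.le hb.le) hB, mul_nonneg hA hB]

/-- Core real-number reverse triangle inequality. -/
lemma key_triangle (a b A B C : ℝ) (ha : 0 < a) (hb : 0 < b) (hA : 0 ≤ A) (hB : 0 ≤ B)
    (hAa : A ≤ a * a) (hBb : B ≤ b * b) (hC : C^2 ≤ A * B) :
    Real.sqrt (a*a - A) + Real.sqrt (b*b - B)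
      ≤ Real.sqrt ((a+b)*(a+b) - (A + 2*C + B)) := by
  set α := Real.sqrt A with hα
  set β := Real.sqrt B with hβ
  have hα2 : α^2 = A := Real.sq_sqrt hA
  have hβ2 : β^2 = B := Real.sq_sqrt hB
  have hα0 : 0 ≤ α := Real.sqrt_nonneg _
  have hβ0 : 0 ≤ β := Real.sqrt_nonneg _
  have hαa : α ≤ a := by
    have := Real.sqrt_le_sqrt hAa
    rwa [Real.sqrt_mul_self ha.le] at this
  have hβb : β ≤ b := by
    have := Real.sqrt_le_sqrt hBb
    rwa [Real.sqrt_mul_self hb.le] at this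
  have hCαβ : C ≤ α * β := by
    nlinarith [sq_nonneg (C - α*β), sq_nonneg (C + α*β), mul_nonneg hα0 hβ0]
  have hP : 0 ≤ a*a - A := by linarith
  have hQ : 0 ≤ b*b - B := by linarith
  have hsum0 : 0 ≤ Real.sqrt (a*a - A) + Real.sqrt (b*b - B) :=
    add_nonneg (Real.sqrt_nonneg _) (Real.sqrt_nonneg _)
  have habαβ : 0 ≤ a*b - α*β := by nlinarith
  rw [Real.le_sqrt hsum0 (by nlinarith [Real.sqrt_nonneg ((a*a - A)*(b*b - B))] : (0:ℝ) ≤ (a+b)*(a+b) - (A + 2*C + B))]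
  have hexp : (Real.sqrt (a*a - A) + Real.sqrt (b*b - B))^2
      = (a*a - A) + (b*b - B) + 2 * Real.sqrt ((a*a - A)*(b*b - B)) := by
    rw [add_sq, Real.sq_sqrt hP, Real.sq_sqrt hQ, mul_assoc, ← Real.sqrt_mul hP]
    ring
  rw [hexp]
  have hmain : Real.sqrt ((a*a - A)*(b*b - B)) ≤ a*b - C := by
    have h1 : (a*a - A)*(b*b - B) ≤ (a*b - C)^2 := by
      nlinarith [sq_nonneg (a*β - b*α)]
    have h2 : (0:ℝ) ≤ a*b - C := by linarith
    calc Real.sqrt ((a*a - A)*(b*b - B)) ≤ Real.sqrt ((a*b - C)^2) := Real.sqrt_le_sqrt h1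
      _ = a*b - C := Real.sqrt_sq h2
  linarith

lemma fdCausal_data (n : ℕ) (v : Fin (n+1) → ℝ) (h : FdCausal n v) :
    0 < v 0 ∧ (∑ i : Fin n, v i.succ * v i.succ) ≤ v 0 * v 0 := by
  refine ⟨h.2.2, ?_⟩
  have := h.1
  simp only [eta] at this
  linarith

lemma eta_self_eq (n : ℕ) (v : Fin (n+1) → ℝ) :
    eta n v v = -(v 0 * v 0) + ∑ i : Fin n, v i.succ * v i.succ := rfl

lemma ne_zero_of_pos_time (n : ℕ) (v : Fin (n+1) → ℝ) (h : 0 < v 0) : v ≠ 0 := by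
  intro hv
  rw [hv] at h
  simp at h

/-- Sum of future-directed causal vectors is future-directed causal, together with
the reverse triangle inequality for the proper time. -/
lemma fdCausal_add (n : ℕ) (u w : Fin (n+1) → ℝ) (hu : FdCausal n u) (hw : FdCausal n w) :
    FdCausal n (u + w) ∧
    Real.sqrt (-(eta n u u)) + Real.sqrt (-(eta n w w)) ≤ Real.sqrt (-(eta n (u+w) (u+w))) := by
  obtain ⟨ha, hAa⟩ := fdCausal_data n u hu
  obtain ⟨hb, hBb⟩ := fdCausal_data n w hw
  set a := u 0
  set b := w 0
  set A := ∑ i : Fin n, u i.succ * u i.succ with hAdef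
  set B := ∑ i : Fin n, w i.succ * w i.succ with hBdef
  set C := ∑ i : Fin n, u i.succ * w i.succ with hCdef
  have hA : 0 ≤ A := spatial_sq_nonneg n u
  have hB : 0 ≤ B := spatial_sq_nonneg n w
  have hC : C^2 ≤ A * B := spatial_cs n u w
  have hcross : C ≤ a * b := key_cross a b A B C ha hb hA hB hAa hBb hC
  have hadd : eta n (u + w) (u + w) = eta n u u + 2 * eta n u w + eta n w w :=
    eta_add_add n u w
  have huu : eta n u u = -(a*a) + A := rfl
  have hww : eta n w w = -(b*b) + B := rfl
  have huw : eta n u w = -(a*b) + C := rfl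
  have htime : (u + w) 0 = a + b := rfl
  constructor
  · refine ⟨?_, ne_zero_of_pos_time n _ (by rw [htime]; linarith), by rw [htime]; linarith⟩
    rw [hadd, huu, hww, huw]
    linarith
  · have hgoal := key_triangle a b A B C ha hb hA hB hAa hBb hC
    rw [huu, hww, hadd, huu, hww, huw]
    have e1 : -(-(a*a) + A) = a*a - A := by ring
    have e2 : -(-(b*b) + B) = b*b - B := by ring
    have e3 : -(-(a*a) + A + 2*(-(a*b) + C) + (-(b*b) + B)) = (a+b)*(a+b) - (A + 2*C + B) := by
      ring
    rw [e1, e2, e3]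
    exact hgoal

lemma tauMink_self (n : ℕ) (p : Fin (n+1) → ℝ) : tauMink n p p = 0 := by
  rw [tauMink, if_neg]
  intro h
  exact h.2.1 (by simp)

lemma tauMink_nonneg (n : ℕ) (p q : Fin (n+1) → ℝ) : 0 ≤ tauMink n p q := by
  rw [tauMink]
  split
  · exact Real.sqrt_nonneg _
  · exact le_refl 0

theorem minkowski_is_lorentzian_pre_length_space (n : ℕ) :
    (∀ p : Fin (n + 1) → ℝ, CausalLe n p p) ∧
    (∀ p q r : Fin (n + 1) → ℝ, CausalLe n p q → CausalLe n q r → CausalLe n p r) ∧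
    (∀ p q r : Fin (n + 1) → ℝ, ChronLt n p q → ChronLt n q r → ChronLt n p r) ∧
    (∀ p q : Fin (n + 1) → ℝ, ChronLt n p q → CausalLe n p q) ∧
    LowerSemicontinuous (fun pq : (Fin (n + 1) → ℝ) × (Fin (n + 1) → ℝ) =>
      tauMink n pq.1 pq.2) ∧
    (∀ x y z : Fin (n + 1) → ℝ, CausalLe n x y → CausalLe n y z →
      tauMink n x y + tauMink n y z ≤ tauMink n x z) ∧
    (∀ x y : Fin (n + 1) → ℝ, ¬ CausalLe n x y → tauMink n x y = 0) ∧
    (∀ x y : Fin (n + 1) → ℝ, 0 < tauMink n x y ↔ ChronLt n x y) := by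
  have hetacont : Continuous (fun x : (Fin (n+1) → ℝ) × (Fin (n+1) → ℝ) =>
      eta n (x.2 - x.1) (x.2 - x.1)) := by
    unfold eta
    fun_prop
  have htimecont : Continuous (fun x : (Fin (n+1) → ℝ) × (Fin (n+1) → ℝ) =>
      (x.2 - x.1) 0) := by fun_prop
  refine ⟨?_, ?_, ?_, ?_, ?_, ?_, ?_, ?_⟩
  · intro p; exact Or.inl rfl
  · -- transitivity of CausalLe
    rintro p q r (rfl | hpq) hqr
    · exact hqr
    rcases hqr with rfl | hqr
    · exact Or.inr hpq
    right
    have : r - p = (q - p) + (r - q) := by abel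
    rw [this]
    exact (fdCausal_add n _ _ hpq hqr).1
  · -- transitivity of ChronLt
    rintro p q r ⟨hpq1, hpq2⟩ ⟨hqr1, hqr2⟩
    have hu : FdCausal n (q - p) := ⟨hpq1.le, ne_zero_of_pos_time n _ hpq2, hpq2⟩
    have hw : FdCausal n (r - q) := ⟨hqr1.le, ne_zero_of_pos_time n _ hqr2, hqr2⟩
    obtain ⟨ha, hAa'⟩ := fdCausal_data n _ hu
    obtain ⟨hb, hBb'⟩ := fdCausal_data n _ hw
    have hAa : (∑ i : Fin n, (q-p) i.succ * (q-p) i.succ) < (q-p) 0 * (q-p) 0 := by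
      have := hpq1; rw [eta_self_eq] at this; linarith
    have hBb : (∑ i : Fin n, (r-q) i.succ * (r-q) i.succ) < (r-q) 0 * (r-q) 0 := by
      have := hqr1; rw [eta_self_eq] at this; linarith
    have hC := spatial_cs n (q-p) (r-q)
    have hcross := key_cross_strict ((q-p) 0) ((r-q) 0)
      (∑ i : Fin n, (q-p) i.succ * (q-p) i.succ) (∑ i : Fin n, (r-q) i.succ * (r-q) i.succ)
      (∑ i : Fin n, (q-p) i.succ * (r-q) i.succ) ha hb
      (spatial_sq_nonneg n _) (spatial_sq_nonneg n _) hAa hBb hC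
    have hsum : r - p = (q - p) + (r - q) := by abel
    constructor
    · rw [hsum, eta_add_add]
      have huw : eta n (q-p) (r-q)
          = -((q-p) 0 * (r-q) 0) + ∑ i : Fin n, (q-p) i.succ * (r-q) i.succ := rfl
      rw [eta_self_eq, eta_self_eq, huw]
      linarith
    · rw [hsum]
      show 0 < ((q - p) + (r - q)) 0
      rw [Pi.add_apply]
      linarith
  · -- ChronLt → CausalLe
    rintro p q ⟨h1, h2⟩
    exact Or.inr ⟨h1.le, ne_zero_of_pos_time n _ h2, h2⟩
  · -- lower semicontinuity
    intro pq y hy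
    have hy' : y < tauMink n pq.1 pq.2 := hy
    clear hy
    rcases lt_or_ge y 0 with hy0 | hy0
    · filter_upwards with x
      exact lt_of_lt_of_le hy0 (tauMink_nonneg n _ _)
    · -- here tauMink pq.1 pq.2 > y ≥ 0, so the causal branch is taken
      by_cases hc : FdCausal n (pq.2 - pq.1)
      · have htau : tauMink n pq.1 pq.2 = Real.sqrt (-(eta n (pq.2 - pq.1) (pq.2 - pq.1))) := by
          rw [tauMink, if_pos hc]
        rw [htau] at hy'
        have heta : eta n (pq.2 - pq.1) (pq.2 - pq.1) < 0 := by
          by_contra h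
          push_neg at h
          have : Real.sqrt (-(eta n (pq.2 - pq.1) (pq.2 - pq.1))) = 0 :=
            Real.sqrt_eq_zero'.mpr (by linarith)
          linarith
        have hsqrtcont : Continuous (fun x : (Fin (n+1) → ℝ) × (Fin (n+1) → ℝ) =>
            Real.sqrt (-(eta n (x.2 - x.1) (x.2 - x.1)))) :=
          Real.continuous_sqrt.comp hetacont.neg
        have h1 : ∀ᶠ x in nhds pq, eta n (x.2 - x.1) (x.2 - x.1) < 0 :=
          (hetacont.tendsto pq).eventually_lt_const heta
        have h2 : ∀ᶠ x in nhds pq, 0 < (x.2 - x.1) 0 :=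
          (htimecont.tendsto pq).eventually_const_lt hc.2.2
        have h3 : ∀ᶠ x in nhds pq, y < Real.sqrt (-(eta n (x.2 - x.1) (x.2 - x.1))) :=
          (hsqrtcont.tendsto pq).eventually_const_lt hy'
        filter_upwards [h1, h2, h3] with x hx1 hx2 hx3
        have hcx : FdCausal n (x.2 - x.1) := ⟨hx1.le, ne_zero_of_pos_time n _ hx2, hx2⟩
        show y < tauMink n x.1 x.2
        rw [tauMink, if_pos hcx]
        exact hx3
      · exfalso
        rw [tauMink, if_neg hc] at hy'
        linarith
  · -- reverse triangle inequality
    rintro x y z (rfl | hxy) hyz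
    · rw [tauMink_self]; simp
    rcases hyz with rfl | hyz
    · rw [tauMink_self]; simp
    have hsum : z - x = (y - x) + (z - y) := by abel
    obtain ⟨hcz, htri⟩ := fdCausal_add n (y - x) (z - y) hxy hyz
    rw [tauMink, tauMink, tauMink, if_pos hxy, if_pos hyz, hsum, if_pos hcz]
    exact htri
  · -- τ = 0 when not causally related
    intro x y h
    rw [tauMink, if_neg]
    intro hc
    exact h (Or.inr hc)
  · -- positivity iff chronological
    intro x y
    constructor
    · intro h
      by_cases hc : FdCausal n (y - x)
      · rw [tauMink, if_pos hc] at h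
        have : 0 < -(eta n (y - x) (y - x)) := by
          by_contra hcon
          push_neg at hcon
          rw [Real.sqrt_eq_zero'.mpr (by linarith)] at h
          exact lt_irrefl 0 h
        exact ⟨by linarith, hc.2.2⟩
      · rw [tauMink, if_neg hc] at h
        exact absurd h (lt_irrefl 0)
    · rintro ⟨h1, h2⟩
      have hc : FdCausal n (y - x) := ⟨h1.le, ne_zero_of_pos_time n _ h2, h2⟩
      rw [tauMink, if_pos hc]
      exact Real.sqrt_pos.mpr (by linarith)
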